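/- Let G be a dimer model on the torus with quiver Q = (V, A, s, t) its dual quiver, oriented so the white node is on the right of each arrow. If D ⊆ E = A is a perfect matching and the subquiver Q_D with arrow set A \ D has no oriented cycles, then there exists a total order < on V such that A \ D = { a ∈ A : s(a) < t(a) } and D = { a ∈ A : s(a) > t(a) }. -/

import Mathlib

/-- `IsPath src tgt u v p` : the list of arrows `p` forms a directed path from `u` to `v`. -/
def IsPath {V A : Type*} (src tgt : A → V) : V → V → List A → Prop
  | u, v, [] => u = v
  | u, v, a :: p => src a = u ∧ IsPath src tgt (tgt a) v p

lemma IsPath.append {V A : Type*} (src tgt : A → V) :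
    ∀ (p q : List A) (u v w : V), IsPath src tgt u v p → IsPath src tgt v w q →
      IsPath src tgt u w (p ++ q)
  | [], q, u, v, w, hp, hq => by cases hp; exact hq
  | a :: p, q, u, v, w, hp, hq =>
      ⟨hp.1, IsPath.append src tgt p q (tgt a) v w hp.2 hq⟩

/-- For a dimer model `G` on the torus (black nodes `B`, white nodes `W`,
edges = arrows `A` of the dual quiver on the faces `V`, with `around a` the path from
`t a` to `s a` going around the white node adjacent to the edge dual to `a`), if
`D` is a perfect matching and the subquiver with arrows `A \ D` has no oriented cycle,
then there is a total order on `V` with `A \ D = {a | s a < t a}` and `D = {a | s a > t a}`. -/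
theorem stmt_0 {B W V A : Type*} [Fintype V] [Fintype A]
    (src tgt : A → V) (nb : A → B) (nw : A → W)
    (around : A → List A)
    (h_node : ∀ a, ∀ e ∈ around a, nw e = nw a)
    (h_notself : ∀ a, a ∉ around a)
    (h_nonempty : ∀ a, around a ≠ [])
    (h_path : ∀ a, IsPath src tgt (tgt a) (src a) (around a))
    (D : Set A)
    (hPMb : ∀ x : B, ∃! e, e ∈ D ∧ nb e = x)
    (hPMw : ∀ y : W, ∃! e, e ∈ D ∧ nw e = y)
    (hacyc : ¬ ∃ (v : V) (p : List A), p ≠ [] ∧ (∀ e ∈ p, e ∉ D) ∧ IsPath src tgt v v p) :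
    ∃ lt : V → V → Prop, IsStrictTotalOrder V lt ∧
      (∀ a, a ∉ D ↔ lt (src a) (tgt a)) ∧
      (∀ a, a ∈ D ↔ lt (tgt a) (src a)) := by
  classical
  -- one-step relation
  set step : V → V → Prop := fun u v => ∃ a, a ∉ D ∧ src a = u ∧ tgt a = v with hstep
  set r : V → V → Prop := Relation.TransGen step with hr
  -- from TransGen to a path
  have trans_to_path : ∀ u v, r u v →
      ∃ p : List A, p ≠ [] ∧ (∀ e ∈ p, e ∉ D) ∧ IsPath src tgt u v p := by
    intro u v h
    induction h with
    | single h =>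
        obtain ⟨a, haD, hsa, hta⟩ := h
        exact ⟨[a], by simp, by simpa using haD, hsa, hta⟩
    | tail _ h ih =>
        obtain ⟨p, hp0, hpD, hp⟩ := ih
        obtain ⟨a, haD, hsa, hta⟩ := h
        refine ⟨p ++ [a], by simp [hp0], ?_, ?_⟩
        · intro e he
          rcases List.mem_append.1 he with he | he
          · exact hpD e he
          · simp at he; subst he; exact haD
        · exact IsPath.append src tgt p [a] _ _ _ hp ⟨hsa, hta⟩
  -- from a path to TransGen
  have path_to_trans : ∀ (p : List A) (u v : V), p ≠ [] → (∀ e ∈ p, e ∉ D) →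
      IsPath src tgt u v p → r u v := by
    intro p
    induction p with
    | nil => intro u v h; exact absurd rfl h
    | cons a p ih =>
        intro u v _ hD hp
        have hstep1 : step u (tgt a) :=
          ⟨a, hD a List.mem_cons_self, hp.1, rfl⟩
        rcases eq_or_ne p [] with h0 | h0
        · subst h0
          have : tgt a = v := hp.2
          exact this ▸ Relation.TransGen.single hstep1
        · exact (Relation.TransGen.single hstep1).trans
            (ih (tgt a) v h0 (fun e he => hD e (List.mem_cons_of_mem a he)) hp.2)
  have hirr : ∀ v, ¬ r v v := by
    intro v hv
    obtain ⟨p, hp0, hpD, hp⟩ := trans_to_path v v hv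
    exact hacyc ⟨v, p, hp0, hpD, hp⟩
  -- key facts
  have hnotD : ∀ a, a ∉ D → r (src a) (tgt a) := fun a ha =>
    Relation.TransGen.single ⟨a, ha, rfl, rfl⟩
  have hinD : ∀ a, a ∈ D → r (tgt a) (src a) := by
    intro a ha
    refine path_to_trans (around a) _ _ (h_nonempty a) ?_ (h_path a)
    intro e he heD
    have : e = a := by
      obtain ⟨f, _, huniq⟩ := hPMw (nw a)
      have h1 : e = f := huniq e ⟨heD, h_node a e he⟩
      have h2 : a = f := huniq a ⟨ha, rfl⟩
      rw [h1, h2]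
    exact h_notself a (this ▸ he)
  -- reflexive closure is a partial order
  set p0 : V → V → Prop := fun u v => u = v ∨ r u v with hp0def
  haveI : IsPartialOrder V p0 :=
    { refl := fun v => Or.inl rfl
      trans := by
        intro u v w huv hvw
        rcases huv with rfl | huv
        · exact hvw
        rcases hvw with rfl | hvw
        · exact Or.inr huv
        · exact Or.inr (huv.trans hvw)
      antisymm := by
        intro u v huv hvu
        rcases huv with rfl | huv
        · rfl
        rcases hvu with rfl | hvu
        · rfl
        · exact absurd (huv.trans hvu) (hirr u) }
  obtain ⟨s, hs, hle⟩ := extend_partialOrder p0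
  set lt : V → V → Prop := fun u v => s u v ∧ u ≠ v with hltdef
  have hanti : IsAntisymm V s := by haveI := hs; infer_instance
  have hstot : IsTotal V s := by haveI := hs; infer_instance
  have hstrans : IsTrans V s := by haveI := hs; infer_instance
  have hr_lt : ∀ u v, r u v → lt u v := by
    intro u v huv
    refine ⟨hle u v (Or.inr huv), ?_⟩
    rintro rfl
    exact hirr u huv
  have hasym : ∀ u v, lt u v → ¬ lt v u := by
    rintro u v ⟨h1, h2⟩ ⟨h3, _⟩
    exact h2 (hanti.antisymm _ _ h1 h3)
  refine ⟨lt, ?_, ?_, ?_⟩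
  · have htri : IsTrichotomous V lt := by
      constructor
      intro u v
      rcases eq_or_ne u v with rfl | hne
      · exact fun _ _ => rfl
      rcases hstot.total u v with h | h
      · exact fun h1 _ => (h1 ⟨h, hne⟩).elim
      · exact fun _ h2 => (h2 ⟨h, hne.symm⟩).elim
    have htr : IsTrans V lt := by
      constructor
      rintro u v w ⟨h1, h2⟩ ⟨h3, h4⟩
      refine ⟨hstrans.trans _ _ _ h1 h3, ?_⟩
      rintro rfl
      exact h2 (hanti.antisymm _ _ h1 h3)
    have hir : IsIrrefl V lt := ⟨by rintro v ⟨_, h⟩; exact h rfl⟩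
    exact { }
  · intro a
    constructor
    · intro ha; exact hr_lt _ _ (hnotD a ha)
    · intro hlt ha
      exact hasym _ _ hlt (hr_lt _ _ (hinD a ha))
  · intro a
    constructor
    · intro ha; exact hr_lt _ _ (hinD a ha)
    · intro hlt
      by_contra ha
      exact hasym _ _ hlt (hr_lt _ _ (hnotD a ha))
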